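/- Let X be a geodesic metric space, C ≥ 0, γ : [a, b] → X a continuous path from x to y, and ν : I → X a geodesic. Let p = ν(c) and q = ν(d) be nearest-point projections of x and y onto ν with c ≤ d. If γ lies in the C-neighborhood of ν, then ν restricted to [c, d] lies in the 2C-neighborhood of γ. -/

import Mathlib

open Metric Set MeasureTheory

variable {X : Type*} [MetricSpace X]

/-- A map `γ` is a geodesic on the parameter set `s`. -/
def IsGeodesicOn (γ : ℝ → X) (s : Set ℝ) : Prop :=
  ∀ t ∈ s, ∀ t' ∈ s, dist (γ t) (γ t') = |t - t'|

/-- The set of nearest-point projections of points of `Z` onto `Y`. -/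
def projSet (Y Z : Set X) : Set X :=
  {y | y ∈ Y ∧ ∃ z ∈ Z, dist z y = Metric.infDist z Y}

/-- `Y` is an `α`-contracting closed subset: any geodesic at distance `≥ α` from `Y`
has projection onto `Y` of diameter `≤ α`. -/
def IsContractingSet (α : ℝ) (Y : Set X) : Prop :=
  IsClosed Y ∧ ∀ (γ : ℝ → X) (s : Set ℝ), IsGeodesicOn γ s →
    (∀ t ∈ s, α ≤ Metric.infDist (γ t) Y) →
    Metric.diam (projSet Y (γ '' s)) ≤ α

/-- `X` is a geodesic space: any two points are joined by a geodesic. -/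
def GeodesicSpace (X : Type*) [MetricSpace X] : Prop :=
  ∀ x y : X, ∃ γ : ℝ → X, γ 0 = x ∧ γ (dist x y) = y ∧
    IsGeodesicOn γ (Set.Icc 0 (dist x y))

/-- If a continuous path from `x` to `y` stays in the `C`-neighborhood of a geodesic `ν`,
then `ν` between the projections of `x` and `y` stays in the `2C`-neighborhood of the path. -/
theorem geodesic_in_neighborhood_of_path [ProperSpace X] (hX : GeodesicSpace X)
    (C : ℝ) (hC : 0 ≤ C) {a b : ℝ} (hab : a ≤ b) (γ : ℝ → X)
    (hcont : ContinuousOn γ (Set.Icc a b))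
    (I : Set ℝ) (ν : ℝ → X) (hν : IsGeodesicOn ν I)
    {c d : ℝ} (hc : c ∈ I) (hd : d ∈ I) (hcd : c ≤ d)
    (hp : dist (γ a) (ν c) = Metric.infDist (γ a) (ν '' I))
    (hq : dist (γ b) (ν d) = Metric.infDist (γ b) (ν '' I))
    (hnear : ∀ t ∈ Set.Icc a b, Metric.infDist (γ t) (ν '' I) ≤ C) :
    ∀ t ∈ Set.Icc c d ∩ I, Metric.infDist (ν t) (γ '' Set.Icc a b) ≤ 2 * C := by

  intro t ht
  obtain ⟨⟨hct, htd⟩, htI⟩ := ht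
  -- The two halves of the geodesic, before and after `ν t`.
  set S₁ : Set X := ν '' (I ∩ Set.Iic t) with hS₁
  set S₂ : Set X := ν '' (I ∩ Set.Ici t) with hS₂
  have hS₁ne : S₁.Nonempty := ⟨ν t, ⟨t, ⟨htI, le_refl t⟩, rfl⟩⟩
  have hS₂ne : S₂.Nonempty := ⟨ν t, ⟨t, ⟨htI, le_refl t⟩, rfl⟩⟩
  have hS₁sub : S₁ ⊆ ν '' I := Set.image_mono Set.inter_subset_left
  have hS₂sub : S₂ ⊆ ν '' I := Set.image_mono Set.inter_subset_left
  -- the function measuring which half is closer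
  set f : ℝ → ℝ := fun s => Metric.infDist (γ s) S₁ - Metric.infDist (γ s) S₂ with hf
  have hfc : ContinuousOn f (Set.Icc a b) := by
    apply ContinuousOn.sub
    · exact (Metric.continuous_infDist_pt S₁).comp_continuousOn hcont
    · exact (Metric.continuous_infDist_pt S₂).comp_continuousOn hcont
  have hfa : f a ≤ 0 := by
    have h1 : Metric.infDist (γ a) S₁ ≤ dist (γ a) (ν c) :=
      Metric.infDist_le_dist_of_mem ⟨c, ⟨hc, le_trans hct (le_refl t)⟩, rfl⟩
    have h2 : Metric.infDist (γ a) (ν '' I) ≤ Metric.infDist (γ a) S₂ :=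
      Metric.infDist_le_infDist_of_subset hS₂sub hS₂ne
    simp only [hf]
    linarith [hp ▸ h2]
  have hfb : 0 ≤ f b := by
    have h1 : Metric.infDist (γ b) S₂ ≤ dist (γ b) (ν d) :=
      Metric.infDist_le_dist_of_mem ⟨d, ⟨hd, htd⟩, rfl⟩
    have h2 : Metric.infDist (γ b) (ν '' I) ≤ Metric.infDist (γ b) S₁ :=
      Metric.infDist_le_infDist_of_subset hS₁sub hS₁ne
    simp only [hf]
    linarith [hq ▸ h2]
  obtain ⟨s, hs, hfs⟩ : ∃ s ∈ Set.Icc a b, f s = 0 := by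
    have := intermediate_value_Icc hab hfc (Set.mem_Icc.2 ⟨hfa, hfb⟩)
    obtain ⟨s, hs, hfs⟩ := this
    exact ⟨s, hs, hfs⟩
  -- at s the two infDists are equal, call the common value m
  set m := Metric.infDist (γ s) S₁ with hm
  have hmeq : Metric.infDist (γ s) S₂ = m := by
    simp only [hf] at hfs; linarith
  -- m ≤ C
  have hmC : m ≤ C := by
    have hle : m ≤ Metric.infDist (γ s) (ν '' I) := by
      by_contra hcon
      push_neg at hcon
      have hne : (ν '' I).Nonempty := ⟨ν t, ⟨t, htI, rfl⟩⟩
      obtain ⟨y, ⟨u, huI, rfl⟩, hy⟩ := (Metric.infDist_lt_iff hne).1 hcon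
      rcases le_total u t with hu | hu
      · have h1 : Metric.infDist (γ s) S₁ ≤ dist (γ s) (ν u) :=
          Metric.infDist_le_dist_of_mem ⟨u, ⟨huI, hu⟩, rfl⟩
        rw [← hm] at h1
        linarith
      · have h1 : Metric.infDist (γ s) S₂ ≤ dist (γ s) (ν u) :=
          Metric.infDist_le_dist_of_mem ⟨u, ⟨huI, hu⟩, rfl⟩
        rw [hmeq] at h1
        linarith
    exact le_trans hle (hnear s hs)
  -- conclude via an ε argument
  apply le_of_forall_pos_le_add
  intro ε hε
  have hε2 : 0 < ε / 2 := by linarith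
  obtain ⟨y₁, hy₁S, hy₁⟩ : ∃ y ∈ S₁, dist (γ s) y < C + ε / 2 :=
    (Metric.infDist_lt_iff hS₁ne).1 (lt_of_le_of_lt hmC (by linarith))
  obtain ⟨y₂, hy₂S, hy₂⟩ : ∃ y ∈ S₂, dist (γ s) y < C + ε / 2 :=
    (Metric.infDist_lt_iff hS₂ne).1 (lt_of_le_of_lt (hmeq.le.trans hmC) (by linarith))
  obtain ⟨u, ⟨huI, hut⟩, rfl⟩ := hy₁S
  obtain ⟨v, ⟨hvI, htv⟩, rfl⟩ := hy₂S
  simp only [Set.mem_Iic] at hut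
  simp only [Set.mem_Ici] at htv
  have hduv : dist (ν u) (ν v) = v - u := by
    rw [hν u huI v hvI, abs_of_nonpos (by linarith)]; ring
  have hsum : v - u < 2 * C + ε := by
    calc v - u = dist (ν u) (ν v) := hduv.symm
    _ ≤ dist (ν u) (γ s) + dist (γ s) (ν v) := dist_triangle _ _ _
    _ < (C + ε / 2) + (C + ε / 2) := by
        rw [dist_comm (ν u)]; exact add_lt_add hy₁ hy₂
    _ = 2 * C + ε := by ring
  have key : dist (ν t) (γ s) ≤ 2 * C + ε := by
    rcases le_or_gt (t - u) (C + ε / 2) with h | h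
    · have hdt : dist (ν t) (ν u) = t - u := by
        rw [hν t htI u huI, abs_of_nonneg (by linarith)]
      calc dist (ν t) (γ s) ≤ dist (ν t) (ν u) + dist (ν u) (γ s) := dist_triangle _ _ _
      _ ≤ (C + ε / 2) + (C + ε / 2) := by
          rw [dist_comm (ν u)]; exact add_le_add (hdt ▸ h) hy₁.le
      _ = 2 * C + ε := by ring
    · have hvt : v - t ≤ C + ε / 2 := by linarith
      have hdt : dist (ν t) (ν v) = v - t := by
        rw [hν t htI v hvI, abs_of_nonpos (by linarith)]; ring
      calc dist (ν t) (γ s) ≤ dist (ν t) (ν v) + dist (ν v) (γ s) := dist_triangle _ _ _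
      _ ≤ (C + ε / 2) + (C + ε / 2) := by
          rw [dist_comm (ν v)]; exact add_le_add (hdt ▸ hvt) hy₂.le
      _ = 2 * C + ε := by ring
  calc Metric.infDist (ν t) (γ '' Set.Icc a b) ≤ dist (ν t) (γ s) :=
      Metric.infDist_le_dist_of_mem ⟨s, hs, rfl⟩
  _ ≤ 2 * C + ε := key
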